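/- For any ε ∈ (0,1), β_n(ε) ≤ exp(-n·(D(P‖Q) - C_X(P,Q)·√(2 ln(1/ε)/n))) for every n ≥ 1; i.e., there exists a test with Type I error at most ε and Type II error bounded by this explicit exponential quantity. -/

import Mathlib

open Finset Filter Real
open scoped BigOperators Classical ENNReal

/-- The n-fold product (i.i.d.) probability mass function on `Fin n → X`. -/
noncomputable def prodP {X : Type*} [Fintype X] (P : X → ℝ) (n : ℕ) (x : Fin n → X) : ℝ :=
  ∏ i, P (x i)

/-- Kullback–Leibler divergence (natural logarithm). -/
noncomputable def KL {X : Type*} [Fintype X] (P Q : X → ℝ) : ℝ :=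
  ∑ x, P x * Real.log (P x / Q x)

/-- `C_X(P,Q) = sup_{x : P(x) > 0} |log (P(x)/Q(x))|`. -/
noncomputable def Cx {X : Type*} [Fintype X] (P Q : X → ℝ) : ℝ :=
  ⨆ x : {x : X // 0 < P x}, |Real.log (P x.1 / Q x.1)|

/-- Minimal Type II error probability under a Type I error constraint `ε`. -/
noncomputable def beta {X : Type*} [Fintype X] [DecidableEq X] (P Q : X → ℝ) (n : ℕ)
    (ε : ℝ) : ℝ :=
  sInf {b : ℝ | ∃ A : Finset (Fin n → X),
    (∑ x ∈ Aᶜ, prodP P n x) ≤ ε ∧ b = ∑ x ∈ A, prodP Q n x}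

lemma den_pos (q : ℝ) (h0 : 0 ≤ q) (h1 : q ≤ 1) (t : ℝ) :
    0 < 1 - q + q * Real.exp t := by
  nlinarith [Real.exp_pos t, mul_nonneg h0 (Real.exp_pos t).le]

lemma crux (q : ℝ) (h0 : 0 ≤ q) (h1 : q ≤ 1) (h : ℝ) :
    Real.log (1 - q + q * Real.exp h) ≤ q * h + h ^ 2 / 8 := by
  set den : ℝ → ℝ := fun t => 1 - q + q * Real.exp t with hden_def
  have hden : ∀ t, 0 < den t := den_pos q h0 h1
  set G : ℝ → ℝ := fun t => q + t / 4 - q * Real.exp t / den t with hG_def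
  set g : ℝ → ℝ := fun t => q * t + t ^ 2 / 8 - Real.log (den t) with hg_def
  have hden' : ∀ t, HasDerivAt den (q * Real.exp t) t := by
    intro t
    exact ((Real.hasDerivAt_exp t).const_mul q).const_add (1 - q)
  have hg' : ∀ t, HasDerivAt g (G t) t := by
    intro t
    have h1' : HasDerivAt (fun t : ℝ => q * t) q t := by
      simpa using (hasDerivAt_id t).const_mul q
    have h2' : HasDerivAt (fun t : ℝ => t ^ 2 / 8) (t / 4) t := by
      have := (hasDerivAt_pow 2 t).div_const 8
      refine this.congr_deriv ?_; norm_num; ring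
    have h3' : HasDerivAt (fun t => Real.log (den t)) (q * Real.exp t / den t) t :=
      (hden' t).log (hden t).ne'
    exact (h1'.fun_add h2').fun_sub h3'
  have hG' : ∀ t, HasDerivAt G (1 / 4 - q * Real.exp t * (1 - q) / (den t) ^ 2) t := by
    intro t
    have h2' : HasDerivAt (fun t : ℝ => q + t / 4) (1 / 4) t := by
      simpa using ((hasDerivAt_id t).div_const 4).const_add q
    have h3' : HasDerivAt (fun t => q * Real.exp t / den t)
        ((q * Real.exp t * den t - q * Real.exp t * (q * Real.exp t)) / (den t) ^ 2) t :=
      ((Real.hasDerivAt_exp t).const_mul q).div (hden' t) (hden t).ne'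
    have := h2'.fun_sub h3'
    refine this.congr_deriv ?_
    have hd : den t = 1 - q + q * Real.exp t := rfl
    field_simp [hd]
    ring
  have hGmono : Monotone G := by
    apply monotone_of_deriv_nonneg (fun t => (hG' t).differentiableAt)
    intro t
    rw [(hG' t).deriv]
    have hd2 : (0:ℝ) < (den t) ^ 2 := pow_pos (hden t) 2
    rw [sub_nonneg, div_le_iff₀ hd2]
    have hd : den t = 1 - q + q * Real.exp t := rfl
    nlinarith [sq_nonneg (1 - q - q * Real.exp t), Real.exp_pos t]
  have hG0 : G 0 = 0 := by
    have hd : den 0 = 1 := by simp [hden_def]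
    simp [hG_def, hd]
  have hgd : Differentiable ℝ g := fun t => (hg' t).differentiableAt
  have hg0 : g 0 = 0 := by
    have hd : den 0 = 1 := by simp [hden_def]
    simp [hg_def, hd]
  have key : 0 ≤ g h := by
    rcases le_total 0 h with hh | hh
    · have hmono : MonotoneOn g (Set.Ici 0) := by
        apply monotoneOn_of_deriv_nonneg (convex_Ici 0) hgd.continuous.continuousOn
          hgd.differentiableOn
        intro x hx
        rw [(hg' x).deriv, ← hG0]
        exact hGmono (le_of_lt (by simpa using hx))
      have := hmono (Set.self_mem_Ici) (Set.mem_Ici.2 hh) hh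
      simpa [hg0] using this
    · have hanti : AntitoneOn g (Set.Iic 0) := by
        apply antitoneOn_of_deriv_nonpos (convex_Iic 0) hgd.continuous.continuousOn
          hgd.differentiableOn
        intro x hx
        rw [(hg' x).deriv, ← hG0]
        exact hGmono (le_of_lt (by simpa using hx))
      have := hanti (Set.mem_Iic.2 hh) (Set.self_mem_Iic) hh
      simpa [hg0] using this
  have : Real.log (den h) ≤ q * h + h ^ 2 / 8 := by
    simpa [hg_def, sub_nonneg] using key
  exact this

lemma mgf_le {X : Type*} [Fintype X] (p f : X → ℝ) (C t : ℝ) (hC : 0 < C)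
    (hp0 : ∀ x, 0 ≤ p x) (hp1 : ∑ x, p x = 1)
    (hf : ∀ x, 0 < p x → |f x| ≤ C) :
    ∑ x, p x * Real.exp (t * f x)
      ≤ Real.exp (t * (∑ x, p x * f x) + t ^ 2 * C ^ 2 / 2) := by
  set μ := ∑ x, p x * f x with hμdef
  have hμ : |μ| ≤ C := by
    calc |μ| ≤ ∑ x, |p x * f x| := Finset.abs_sum_le_sum_abs _ _
    _ ≤ ∑ x, p x * C := by
        apply Finset.sum_le_sum
        intro x _
        rcases eq_or_lt_of_le (hp0 x) with h | h
        · simp [← h]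
        · rw [abs_mul, abs_of_nonneg (hp0 x)]
          exact mul_le_mul_of_nonneg_left (hf x h) (hp0 x)
    _ = C := by rw [← Finset.sum_mul, hp1, one_mul]
  -- chord step
  have step1 : ∑ x, p x * Real.exp (t * f x)
      ≤ (C - μ) / (2 * C) * Real.exp (-(t * C)) + (C + μ) / (2 * C) * Real.exp (t * C) := by
    have chord : ∀ x, 0 < p x → Real.exp (t * f x)
        ≤ (C - f x) / (2 * C) * Real.exp (-(t * C)) + (C + f x) / (2 * C) * Real.exp (t * C) := by
      intro x hx
      have habs := hf x hx
      have h1 : 0 ≤ (C - f x) / (2 * C) := by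
        apply div_nonneg _ (by linarith)
        have := abs_le.1 habs; linarith [this.2]
      have h2 : 0 ≤ (C + f x) / (2 * C) := by
        apply div_nonneg _ (by linarith)
        have := abs_le.1 habs; linarith [this.1]
      have hsum : (C - f x) / (2 * C) + (C + f x) / (2 * C) = 1 := by
        field_simp; ring
      have := convexOn_exp.2 (Set.mem_univ (-(t * C))) (Set.mem_univ (t * C)) h1 h2 hsum
      have harg : (C - f x) / (2 * C) * (-(t * C)) + (C + f x) / (2 * C) * (t * C) = t * f x := by
        field_simp; ring
      simp only [smul_eq_mul] at this
      rw [harg] at this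
      simpa using this
    calc ∑ x, p x * Real.exp (t * f x)
        ≤ ∑ x, (p x * (C - f x) * (Real.exp (-(t * C)) / (2 * C))
            + p x * (C + f x) * (Real.exp (t * C) / (2 * C))) := by
          apply Finset.sum_le_sum
          intro x _
          rcases eq_or_lt_of_le (hp0 x) with h | h
          · simp [← h]
          · have := mul_le_mul_of_nonneg_left (chord x h) (hp0 x)
            calc p x * Real.exp (t * f x) ≤ p x * ((C - f x) / (2 * C) * Real.exp (-(t * C))
                + (C + f x) / (2 * C) * Real.exp (t * C)) := this
            _ = p x * (C - f x) * (Real.exp (-(t * C)) / (2 * C))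
                + p x * (C + f x) * (Real.exp (t * C) / (2 * C)) := by ring
    _ = (C - μ) / (2 * C) * Real.exp (-(t * C)) + (C + μ) / (2 * C) * Real.exp (t * C) := by
        rw [Finset.sum_add_distrib, ← Finset.sum_mul, ← Finset.sum_mul]
        have e1 : ∑ x, p x * (C - f x) = C - μ := by
          simp only [mul_sub, Finset.sum_sub_distrib, ← Finset.sum_mul, hp1, hμdef]; ring
        have e2 : ∑ x, p x * (C + f x) = C + μ := by
          simp only [mul_add, Finset.sum_add_distrib, ← Finset.sum_mul, hp1, hμdef]; ring
        rw [e1, e2]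
        ring
  -- crux step
  have hq0 : 0 ≤ (C - μ) / (2 * C) := by
    apply div_nonneg _ (by linarith)
    have := abs_le.1 hμ; linarith [this.2]
  have hq1 : (C - μ) / (2 * C) ≤ 1 := by
    rw [div_le_one (by linarith)]
    have := abs_le.1 hμ; linarith [this.1]
  set q := (C - μ) / (2 * C) with hqdef
  have step2 : (C - μ) / (2 * C) * Real.exp (-(t * C)) + (C + μ) / (2 * C) * Real.exp (t * C)
      ≤ Real.exp (t * μ + t ^ 2 * C ^ 2 / 2) := by
    have hkey := crux q hq0 hq1 (-(2 * t * C))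
    have hpos : 0 < 1 - q + q * Real.exp (-(2 * t * C)) := den_pos q hq0 hq1 _
    have hle : 1 - q + q * Real.exp (-(2 * t * C))
        ≤ Real.exp (q * (-(2 * t * C)) + (-(2 * t * C)) ^ 2 / 8) := by
      rw [← Real.exp_log hpos]
      exact Real.exp_le_exp.2 hkey
    have expand : (C - μ) / (2 * C) * Real.exp (-(t * C)) + (C + μ) / (2 * C) * Real.exp (t * C)
        = Real.exp (t * C) * (1 - q + q * Real.exp (-(2 * t * C))) := by
      rw [hqdef]
      have : Real.exp (-(t * C)) = Real.exp (t * C) * Real.exp (-(2 * t * C)) := by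
        rw [← Real.exp_add]; ring_nf
      rw [this]
      have h2C : (2 : ℝ) * C ≠ 0 := by positivity
      field_simp
      ring
    rw [expand]
    calc Real.exp (t * C) * (1 - q + q * Real.exp (-(2 * t * C)))
        ≤ Real.exp (t * C) * Real.exp (q * (-(2 * t * C)) + (-(2 * t * C)) ^ 2 / 8) :=
          mul_le_mul_of_nonneg_left hle (Real.exp_pos _).le
    _ = Real.exp (t * C + (q * (-(2 * t * C)) + (-(2 * t * C)) ^ 2 / 8)) := by
          rw [← Real.exp_add]
    _ = Real.exp (t * μ + t ^ 2 * C ^ 2 / 2) := by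
          congr 1
          rw [hqdef]
          field_simp
          ring
  exact le_trans step1 step2

lemma sum_prod_univ {X : Type*} [Fintype X] (n : ℕ) (g : X → ℝ) :
    ∑ x : Fin n → X, ∏ i, g (x i) = (∑ y, g y) ^ n := by
  rw [Finset.sum_pow' Finset.univ g n, Fintype.piFinset_univ]

theorem achievability_fixed_epsilon
    {X : Type*} [Fintype X] [DecidableEq X] (P Q : X → ℝ)
    (hP0 : ∀ x, 0 ≤ P x) (hP1 : ∑ x, P x = 1)
    (hQ0 : ∀ x, 0 ≤ Q x) (hQ1 : ∑ x, Q x = 1)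
    (hac : ∀ x, Q x = 0 → P x = 0) (hD : 0 < KL P Q)
    (ε : ℝ) (hε0 : 0 < ε) (hε1 : ε < 1) (n : ℕ) (hn : 1 ≤ n) :
    beta P Q n ε
      ≤ Real.exp (-(n * (KL P Q - Cx P Q * Real.sqrt (2 * Real.log (1 / ε) / n)))) := by
  classical
  set L : X → ℝ := fun x => Real.log (P x / Q x) with hLdef
  set D := KL P Q with hDdef
  set C := Cx P Q with hCdef
  have hKL : D = ∑ x, P x * L x := rfl
  have hbdd : BddAbove (Set.range fun x : {x : X // 0 < P x} => |Real.log (P x.1 / Q x.1)|) :=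
    Set.Finite.bddAbove (Set.finite_range _)
  have hCb : ∀ x, 0 < P x → |L x| ≤ C := fun x hx => le_ciSup hbdd ⟨x, hx⟩
  have hDC : D ≤ C := by
    rw [hKL]
    calc ∑ x, P x * L x ≤ ∑ x, P x * C := by
          apply Finset.sum_le_sum
          intro x _
          rcases eq_or_lt_of_le (hP0 x) with h | h
          · rw [← h]; simp
          · exact mul_le_mul_of_nonneg_left
              (le_trans (le_abs_self _) (hCb x h)) (hP0 x)
    _ = C := by rw [← Finset.sum_mul, hP1, one_mul]
  have hC : 0 < C := lt_of_lt_of_le hD hDC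
  have hn0 : (0:ℝ) < (n:ℝ) := by exact_mod_cast Nat.lt_of_lt_of_le Nat.zero_lt_one hn
  have hlog : 0 < Real.log (1/ε) := Real.log_pos (by rw [lt_div_iff₀ hε0]; linarith)
  set u := Real.sqrt (2 * Real.log (1/ε) / n) with hudef
  have hu2 : u ^ 2 = 2 * Real.log (1/ε) / n := Real.sq_sqrt (by positivity)
  have hupos : 0 < u := Real.sqrt_pos.2 (by positivity)
  set lam := u / C with hlamdef
  have hlam : 0 < lam := div_pos hupos hC
  set γ := (n:ℝ) * (D - C * u) with hγdef
  -- basic nonnegativity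
  have hprodP0 : ∀ x : Fin n → X, 0 ≤ prodP P n x :=
    fun x => Finset.prod_nonneg (fun i _ => hP0 (x i))
  have hprodQ0 : ∀ x : Fin n → X, 0 ≤ prodP Q n x :=
    fun x => Finset.prod_nonneg (fun i _ => hQ0 (x i))
  have hPsum : ∑ x : Fin n → X, prodP P n x = 1 := by
    simp only [prodP]; rw [sum_prod_univ, hP1, one_pow]
  set A : Finset (Fin n → X) :=
    Finset.univ.filter (fun x => 0 < prodP P n x ∧ γ ≤ ∑ i, L (x i)) with hAdef
  -- Type I error bound
  have hTypeI : ∑ x ∈ Aᶜ, prodP P n x ≤ ε := by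
    have term : ∀ x ∈ Aᶜ, prodP P n x
        ≤ Real.exp (lam * γ) * ∏ i, (P (x i) * Real.exp (-lam * L (x i))) := by
      intro x hx
      rcases eq_or_lt_of_le (hprodP0 x) with h | h
      · rw [← h]
        exact mul_nonneg (Real.exp_pos _).le
          (Finset.prod_nonneg fun i _ => mul_nonneg (hP0 _) (Real.exp_pos _).le)
      · have hxA : x ∉ A := Finset.mem_compl.1 hx
        have hS : ∑ i, L (x i) < γ := by
          by_contra hcon
          exact hxA (Finset.mem_filter.2 ⟨Finset.mem_univ x, h, not_lt.1 hcon⟩)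
        have hsplit : ∏ i, (P (x i) * Real.exp (-lam * L (x i)))
            = prodP P n x * Real.exp (-lam * ∑ i, L (x i)) := by
          simp only [prodP]
          rw [Finset.prod_mul_distrib, ← Real.exp_sum, ← Finset.mul_sum]
        rw [hsplit, ← mul_assoc, mul_comm (Real.exp (lam * γ)) (prodP P n x), mul_assoc,
          ← Real.exp_add]
        have h1 : (1:ℝ) ≤ Real.exp (lam * γ + -lam * ∑ i, L (x i)) := by
          apply Real.one_le_exp
          nlinarith
        nlinarith
    calc ∑ x ∈ Aᶜ, prodP P n x
        ≤ ∑ x ∈ Aᶜ, Real.exp (lam * γ) * ∏ i, (P (x i) * Real.exp (-lam * L (x i))) :=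
          Finset.sum_le_sum term
    _ ≤ ∑ x : Fin n → X, Real.exp (lam * γ) * ∏ i, (P (x i) * Real.exp (-lam * L (x i))) := by
          apply Finset.sum_le_sum_of_subset_of_nonneg (Finset.subset_univ _)
          intro x _ _
          exact mul_nonneg (Real.exp_pos _).le
            (Finset.prod_nonneg fun i _ => mul_nonneg (hP0 _) (Real.exp_pos _).le)
    _ = Real.exp (lam * γ) * (∑ y, P y * Real.exp (-lam * L y)) ^ n := by
          rw [← Finset.mul_sum, sum_prod_univ n (fun y => P y * Real.exp (-lam * L y))]
    _ ≤ Real.exp (lam * γ) * (Real.exp (-lam * D + lam ^ 2 * C ^ 2 / 2)) ^ n := by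
          apply mul_le_mul_of_nonneg_left _ (Real.exp_pos _).le
          apply pow_le_pow_left₀
          · exact Finset.sum_nonneg fun y _ => mul_nonneg (hP0 y) (Real.exp_pos _).le
          · have := mgf_le P L C (-lam) hC hP0 hP1 hCb
            rw [← hKL] at this
            calc ∑ y, P y * Real.exp (-lam * L y)
                = ∑ y, P y * Real.exp ((-lam) * L y) := by norm_num
            _ ≤ Real.exp ((-lam) * D + (-lam) ^ 2 * C ^ 2 / 2) := this
            _ = Real.exp (-lam * D + lam ^ 2 * C ^ 2 / 2) := by ring_nf
    _ = ε := by
          rw [← Real.exp_nat_mul, ← Real.exp_add]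
          have harg : lam * γ + (n:ℝ) * (-lam * D + lam ^ 2 * C ^ 2 / 2)
              = -(↑n * u ^ 2) / 2 := by
            rw [hγdef, hlamdef]
            field_simp
            ring
          rw [harg, hu2]
          have : -((n:ℝ) * (2 * Real.log (1/ε) / n)) / 2 = Real.log ε := by
            rw [Real.log_div one_ne_zero (ne_of_gt hε0), Real.log_one]
            field_simp
            ring
          rw [this, Real.exp_log hε0]
  -- Type II error bound
  have hTypeII : ∑ x ∈ A, prodP Q n x ≤ Real.exp (-γ) := by
    have term : ∀ x ∈ A, prodP Q n x ≤ Real.exp (-γ) * prodP P n x := by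
      intro x hx
      obtain ⟨-, hpos, hS⟩ := Finset.mem_filter.1 hx
      have hPi : ∀ i, 0 < P (x i) := by
        intro i
        rcases eq_or_lt_of_le (hP0 (x i)) with h | h
        · exfalso
          have : prodP P n x = 0 := Finset.prod_eq_zero (Finset.mem_univ i) h.symm
          rw [this] at hpos; exact lt_irrefl 0 hpos
        · exact h
      have hQi : ∀ i, 0 < Q (x i) := by
        intro i
        rcases eq_or_lt_of_le (hQ0 (x i)) with h | h
        · exact absurd (hac _ h.symm) (ne_of_gt (hPi i))
        · exact h
      have hid : prodP P n x = prodP Q n x * Real.exp (∑ i, L (x i)) := by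
        simp only [prodP]
        rw [Real.exp_sum, ← Finset.prod_mul_distrib]
        apply Finset.prod_congr rfl
        intro i _
        rw [hLdef]
        rw [Real.exp_log (div_pos (hPi i) (hQi i)), mul_comm,
          div_mul_cancel₀ _ (ne_of_gt (hQi i))]
      have hQval : prodP Q n x = prodP P n x * Real.exp (-(∑ i, L (x i))) := by
        rw [hid, Real.exp_neg]
        field_simp
      rw [hQval, mul_comm (Real.exp (-γ)) (prodP P n x)]
      have : Real.exp (-(∑ i, L (x i))) ≤ Real.exp (-γ) :=
        Real.exp_le_exp.2 (by linarith)
      exact mul_le_mul_of_nonneg_left this (hprodP0 x)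
    calc ∑ x ∈ A, prodP Q n x ≤ ∑ x ∈ A, Real.exp (-γ) * prodP P n x :=
          Finset.sum_le_sum term
    _ = Real.exp (-γ) * ∑ x ∈ A, prodP P n x := by rw [Finset.mul_sum]
    _ ≤ Real.exp (-γ) * 1 := by
          apply mul_le_mul_of_nonneg_left _ (Real.exp_pos _).le
          rw [← hPsum]
          exact Finset.sum_le_sum_of_subset_of_nonneg (Finset.subset_univ _)
            (fun x _ _ => hprodP0 x)
    _ = Real.exp (-γ) := mul_one _
  -- conclude
  have hmem : (∑ x ∈ A, prodP Q n x) ∈ {b : ℝ | ∃ B : Finset (Fin n → X),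
      (∑ x ∈ Bᶜ, prodP P n x) ≤ ε ∧ b = ∑ x ∈ B, prodP Q n x} := ⟨A, hTypeI, rfl⟩
  have hbddS : BddBelow {b : ℝ | ∃ B : Finset (Fin n → X),
      (∑ x ∈ Bᶜ, prodP P n x) ≤ ε ∧ b = ∑ x ∈ B, prodP Q n x} := by
    refine ⟨0, fun b hb => ?_⟩
    obtain ⟨B, -, rfl⟩ := hb
    exact Finset.sum_nonneg fun x _ => hprodQ0 x
  have hfinal : beta P Q n ε ≤ ∑ x ∈ A, prodP Q n x := csInf_le hbddS hmem
  have : Real.exp (-γ) = Real.exp (-(↑n * (D - C * u))) := by rw [hγdef]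
  calc beta P Q n ε ≤ ∑ x ∈ A, prodP Q n x := hfinal
  _ ≤ Real.exp (-γ) := hTypeII
  _ = Real.exp (-(↑n * (D - C * u))) := this
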